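/- arXiv:1211.2367 — 2 statements merged into one kernel-verified Lean document; each statement's English description precedes it below -/
import Mathlib

section
/- Let w be a weighted graph on a finite vertex type V and let I ⊆ V be an independent set in w. Define a weighted graph w' supported on V' = V ∖ I by: for distinct u, v ∈ V', w' u v = min( w u v , inf over x ∈ I of (w u x + w x v) ), and w' u v = ⊤ whenever u ∈ I or v ∈ I. Then for all u, v ∈ V', dist_{w'}(u,v) = dist_w(u,v). -/
namespace ISLabel

variable {V : Type*}

/-- Two vertices are adjacent in the weighted graph `w` when they are distinct and
joined by an edge of finite weight. -/
def Adj (w : V → V → ℕ∞) (u v : V) : Prop := u ≠ v ∧ w u v < ⊤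

/-- `p` is a walk from `u` to `v` in the weighted graph `w`: a nonempty list of
vertices starting at `u`, ending at `v`, with consecutive vertices adjacent. -/
def IsWalk (w : V → V → ℕ∞) (u v : V) (p : List V) : Prop :=
  p ≠ [] ∧ p.head? = some u ∧ p.getLast? = some v ∧ p.Chain' (Adj w)

/-- The length of a list of vertices: the sum of `f` over consecutive pairs. -/
def pathLen (f : V → V → ℕ∞) (p : List V) : ℕ∞ :=
  ((p.zip p.tail).map fun e => f e.1 e.2).sum

/-- The distance from `u` to `v` in `w`: the infimum of the lengths of all walks
from `u` to `v` (`⊤` if there is no such walk). -/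
noncomputable def wdist (w : V → V → ℕ∞) (u v : V) : ℕ∞ :=
  ⨅ p : {p : List V // IsWalk w u v p}, pathLen w p.1

/-- `I` is an independent set in `w`. -/
def IsIndep (w : V → V → ℕ∞) (I : Set V) : Prop :=
  ∀ u ∈ I, ∀ v ∈ I, ¬ Adj w u v

/-- `w` is a weighted undirected graph: symmetric, and every off-diagonal value is
either `⊤` (no edge) or a weight `≥ 1`. -/
def IsWGraph (w : V → V → ℕ∞) : Prop :=
  (∀ u v, w u v = w v u) ∧ ∀ u v, u ≠ v → 1 ≤ w u v

/-- `w` is supported on `S`: all weights touching a vertex outside `S` are `⊤`. -/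
def SupportedOn (w : V → V → ℕ∞) (S : Set V) : Prop :=
  ∀ u v, u ∉ S ∨ v ∉ S → w u v = ⊤

lemma isWalk_singleton {w : V → V → ℕ∞} {u v a : V} :
    IsWalk w u v [a] ↔ u = a ∧ v = a := by
  constructor
  · rintro ⟨-, h1, h2, -⟩
    simp [List.head?] at h1 h2
    exact ⟨h1.symm, h2.symm⟩
  · rintro ⟨rfl, rfl⟩
    exact ⟨by simp, by simp [List.head?], by simp, List.isChain_singleton _⟩

lemma isWalk_cons_cons {w : V → V → ℕ∞} {u v a b : V} {l : List V} :
    IsWalk w u v (a :: b :: l) ↔ u = a ∧ Adj w a b ∧ IsWalk w b v (b :: l) := by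
  constructor
  · rintro ⟨-, h1, h2, h3⟩
    replace h3 := List.isChain_cons_cons.1 h3
    simp [List.head?] at h1
    rw [List.getLast?_cons_cons] at h2
    exact ⟨h1.symm, h3.1, by simp, by simp [List.head?], h2, h3.2⟩
  · rintro ⟨rfl, hab, ⟨-, -, h2, h3⟩⟩
    exact ⟨by simp, by simp [List.head?], by rw [List.getLast?_cons_cons]; exact h2,
      List.isChain_cons_cons.2 ⟨hab, h3⟩⟩

lemma isWalk_head {w : V → V → ℕ∞} {u v : V} {p : List V} (h : IsWalk w u v p) :
    ∃ l, p = u :: l := by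
  obtain ⟨h0, h1, -, -⟩ := h
  cases p with
  | nil => exact absurd rfl h0
  | cons a l => simp [List.head?] at h1; exact ⟨l, by rw [h1]⟩

lemma pathLen_singleton (f : V → V → ℕ∞) (a : V) : pathLen f [a] = 0 := by
  simp [pathLen]

lemma pathLen_cons_cons (f : V → V → ℕ∞) (a b : V) (l : List V) :
    pathLen f (a :: b :: l) = f a b + pathLen f (b :: l) := by
  simp [pathLen]

/-- Direction 2: a walk in `w'` yields a walk in `w` that is no longer. -/
lemma toW [Fintype V] {w : V → V → ℕ∞} {I : Set V} {w' : V → V → ℕ∞}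
    (hw'1 : ∀ u v, u ≠ v → u ∉ I → v ∉ I →
      w' u v = min (w u v) (⨅ x ∈ I, w u x + w x v))
    (hw'2 : ∀ u v, u ∈ I ∨ v ∈ I → w' u v = ⊤) {v : V} :
    ∀ (q : List V) (u : V), IsWalk w' u v q →
      ∃ p, IsWalk w u v p ∧ pathLen w p ≤ pathLen w' q := by
  intro q
  induction q with
  | nil => intro u h; exact absurd rfl h.1
  | cons a rest ih =>
    intro u h
    cases rest with
    | nil =>
      obtain ⟨h1, h2⟩ := isWalk_singleton.1 h
      exact ⟨[a], isWalk_singleton.2 ⟨h1, h2⟩, by simp [pathLen_singleton]⟩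
    | cons b rest' =>
      obtain ⟨rfl, hab, hwalk⟩ := isWalk_cons_cons.1 h
      obtain ⟨p', hp', hlen'⟩ := ih b hwalk
      obtain ⟨l', rfl⟩ := isWalk_head hp'
      obtain ⟨hne, hlt⟩ := hab
      have ha : u ∉ I := fun hmem => by simp [hw'2 u b (Or.inl hmem)] at hlt
      have hb : b ∉ I := fun hmem => by simp [hw'2 u b (Or.inr hmem)] at hlt
      have key : w' u b = min (w u b) (⨅ x ∈ I, w u x + w x b) := hw'1 u b hne ha hb
      rw [key] at hlt
      rcases le_total (w u b) (⨅ x ∈ I, w u x + w x b) with hc | hc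
      · -- keep the edge
        refine ⟨u :: b :: l', isWalk_cons_cons.2 ⟨rfl, ⟨hne, ?_⟩, hp'⟩, ?_⟩
        · rw [min_eq_left hc] at hlt; exact hlt
        · rw [pathLen_cons_cons, pathLen_cons_cons, key, min_eq_left hc]
          exact add_le_add le_rfl hlen'
      · -- use a shortcut vertex
        have hinf : (⨅ x ∈ I, w u x + w x b) < ⊤ := by
          rw [min_eq_right hc] at hlt; exact hlt
        have hne' : I.Nonempty := by
          by_contra hI0
          rw [Set.not_nonempty_iff_eq_empty] at hI0
          simp [hI0] at hinf
        obtain ⟨x, hx, hxmin⟩ := (Set.toFinite I).toFinset.exists_min_image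
          (fun x => w u x + w x b) (by simpa using hne')
        rw [Set.Finite.mem_toFinset] at hx
        simp only [Set.Finite.mem_toFinset] at hxmin
        have hxle : w u x + w x b ≤ ⨅ y ∈ I, w u y + w y b := le_iInf₂ hxmin
        have hfin : w u x + w x b < ⊤ := lt_of_le_of_lt hxle hinf
        have hfin1 : w u x < ⊤ := lt_of_le_of_lt le_self_add hfin
        have hfin2 : w x b < ⊤ := lt_of_le_of_lt le_add_self hfin
        have hux : u ≠ x := fun he => ha (he ▸ hx)
        have hxb : x ≠ b := fun he => hb (he ▸ hx)
        refine ⟨u :: x :: b :: l',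
          isWalk_cons_cons.2 ⟨rfl, ⟨hux, hfin1⟩, isWalk_cons_cons.2 ⟨rfl, ⟨hxb, hfin2⟩, hp'⟩⟩, ?_⟩
        rw [pathLen_cons_cons, pathLen_cons_cons, pathLen_cons_cons, ← add_assoc, key,
          min_eq_right hc]
        exact add_le_add hxle hlen'

/-- Direction 1: a walk in `w` between vertices outside `I` yields a walk in `w'`
that is no longer. -/
lemma toW' {w : V → V → ℕ∞} {I : Set V}
    (hI : IsIndep w I) {w' : V → V → ℕ∞}
    (hw'1 : ∀ u v, u ≠ v → u ∉ I → v ∉ I →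
      w' u v = min (w u v) (⨅ x ∈ I, w u x + w x v)) {v : V} (hv : v ∉ I) :
    ∀ (n : ℕ) (p : List V) (u : V), p.length ≤ n → IsWalk w u v p → u ∉ I →
      ∃ q, IsWalk w' u v q ∧ pathLen w' q ≤ pathLen w p := by
  intro n
  induction n with
  | zero =>
    intro p u hlen h _
    rw [Nat.le_zero, List.length_eq_zero_iff] at hlen
    exact absurd hlen h.1
  | succ n ih =>
    intro p u hlen h hu
    obtain ⟨l, rfl⟩ := isWalk_head h
    cases l with
    | nil =>
      obtain ⟨-, h2⟩ := isWalk_singleton.1 h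
      exact ⟨[u], isWalk_singleton.2 ⟨rfl, h2⟩, by simp [pathLen_singleton]⟩
    | cons b l' =>
      simp only [List.length_cons, Nat.add_le_add_iff_right] at hlen
      obtain ⟨-, ⟨hub, hubfin⟩, hwalk⟩ := isWalk_cons_cons.1 h
      by_cases hb : b ∈ I
      · -- b is in I: skip over it
        cases l' with
        | nil =>
          obtain ⟨-, h2⟩ := isWalk_singleton.1 hwalk
          exact absurd (h2 ▸ hb) hv
        | cons c l'' =>
          obtain ⟨-, ⟨hbc, hbcfin⟩, hwalk'⟩ := isWalk_cons_cons.1 hwalk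
          have hc : c ∉ I := fun hcI => hI b hb c hcI ⟨hbc, hbcfin⟩
          obtain ⟨q', hq', hlen'⟩ := ih (c :: l'') c
            (le_trans (by simp) hlen) hwalk' hc
          by_cases huc : u = c
          · refine ⟨q', huc ▸ hq', ?_⟩
            rw [pathLen_cons_cons, pathLen_cons_cons]
            calc pathLen w' q' ≤ pathLen w (c :: l'') := hlen'
              _ ≤ w u b + (w b c + pathLen w (c :: l'')) := by
                  rw [← add_assoc]; exact le_add_self
          · obtain ⟨l₃, rfl⟩ := isWalk_head hq'
            have hshort : w' u c ≤ w u b + w b c := by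
              rw [hw'1 u c huc hu hc]
              exact le_trans (min_le_right _ _) (iInf₂_le b hb)
            have hfin : w' u c < ⊤ :=
              lt_of_le_of_lt hshort (WithTop.add_lt_top.2 ⟨hubfin, hbcfin⟩)
            refine ⟨u :: c :: l₃, isWalk_cons_cons.2 ⟨rfl, ⟨huc, hfin⟩, hq'⟩, ?_⟩
            rw [pathLen_cons_cons, pathLen_cons_cons, pathLen_cons_cons, ← add_assoc]
            exact add_le_add hshort hlen'
      · -- b is not in I: keep the edge
        obtain ⟨q', hq', hlen'⟩ := ih (b :: l') b hlen hwalk hb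
        obtain ⟨l₃, rfl⟩ := isWalk_head hq'
        have hshort : w' u b ≤ w u b := by
          rw [hw'1 u b hub hu hb]; exact min_le_left _ _
        refine ⟨u :: b :: l₃,
          isWalk_cons_cons.2 ⟨rfl, ⟨hub, lt_of_le_of_lt hshort hubfin⟩, hq'⟩, ?_⟩
        rw [pathLen_cons_cons, pathLen_cons_cons]
        exact add_le_add hshort hlen'

/-- removing an independent set and adding augmenting edges
preserves distances among the remaining vertices. -/
theorem augment_preserves_dist [Fintype V] (w : V → V → ℕ∞) (hw : IsWGraph w)
    (I : Set V) (hI : IsIndep w I) (w' : V → V → ℕ∞)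
    (hw'1 : ∀ u v, u ≠ v → u ∉ I → v ∉ I →
      w' u v = min (w u v) (⨅ x ∈ I, w u x + w x v))
    (hw'2 : ∀ u v, u ∈ I ∨ v ∈ I → w' u v = ⊤) :
    ∀ u v, u ∉ I → v ∉ I → wdist w' u v = wdist w u v := by
  intro u v hu hv
  refine le_antisymm ?_ ?_
  · refine le_iInf fun p => ?_
    obtain ⟨q, hq, hle⟩ := toW' hI hw'1 hv p.1.length p.1 u le_rfl p.2 hu
    exact le_trans (iInf_le _ (⟨q, hq⟩ : {q // IsWalk w' u v q})) hle
  · refine le_iInf fun q => ?_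
    obtain ⟨p, hp, hle⟩ := toW hw'1 hw'2 q.1 u q.2
    exact le_trans (iInf_le _ (⟨p, hp⟩ : {p // IsWalk w u v p})) hle

end ISLabel
end

section
/- Let (L₁, …, L_h; w₁, …, w_h) be a vertex hierarchy of height h on the weighted graph G = (V, w₁). Let s, t ∈ V with dist_G(s,t) < ⊤, and let p be a shortest walk from s to t, i.e. a walk from s to t in w₁ whose length equals dist_G(s,t). Then there is exactly one vertex appearing on p whose level is maximal among the levels of the vertices appearing on p; that is, the set { v : v appears on p and ℓ(v) ≥ ℓ(u) for every u appearing on p } is a singleton. -/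
namespace ISLabel

variable {V : Type*}

/-- `VsetOf L i` is the vertex set `V_i = V ∖ (L₁ ∪ … ∪ L_{i-1})`. -/
def VsetOf (L : ℕ → Set V) (i : ℕ) : Set V := {v | ∀ j, 1 ≤ j → j < i → v ∉ L j}

/-- A vertex hierarchy of height `h ≥ 1` on the weighted graph `w 1`:
pairwise disjoint independent levels `L 1, …, L h` covering `V`, and graphs
`w i` supported on `V_i` obtained by the augmenting-edge construction. -/
structure VertexHierarchy (V : Type*) (h : ℕ) where
  L : ℕ → Set V
  w : ℕ → V → V → ℕ∞
  h_pos : 1 ≤ h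
  wgraph : ∀ i, 1 ≤ i → i ≤ h → IsWGraph (w i)
  disj : ∀ i j, 1 ≤ i → i ≤ h → 1 ≤ j → j ≤ h → i ≠ j → ∀ v, v ∈ L i → v ∉ L j
  cover : ∀ v : V, ∃ i, 1 ≤ i ∧ i ≤ h ∧ v ∈ L i
  supported : ∀ i, 1 ≤ i → i ≤ h → SupportedOn (w i) (VsetOf L i)
  aug : ∀ i, 2 ≤ i → i ≤ h → ∀ u v : V, u ≠ v → u ∈ VsetOf L i → v ∈ VsetOf L i →
    w i u v = min (w (i - 1) u v) (⨅ x ∈ L (i - 1), w (i - 1) u x + w (i - 1) x v)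
  indep : ∀ i, 1 ≤ i → i ≤ h → IsIndep (w i) (L i)

/-- The level `ℓ(v)`: the unique `i` with `1 ≤ i ≤ h` and `v ∈ L i`. -/
noncomputable def level {h : ℕ} (H : VertexHierarchy V h) (v : V) : ℕ :=
  sInf {i | 1 ≤ i ∧ i ≤ h ∧ v ∈ H.L i}

section Aux

theorem List.chain'_pair {α : Type*} {R : α → α → Prop} {x y : α} :
    List.Chain' R [x, y] ↔ R x y := List.isChain_pair

theorem List.chain'_cons {α : Type*} {R : α → α → Prop} {x y : α} {l : List α} :
    List.Chain' R (x :: y :: l) ↔ R x y ∧ List.Chain' R (y :: l) := List.isChain_cons_cons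

theorem List.chain'_append {α : Type*} {R : α → α → Prop} {l₁ l₂ : List α} :
    List.Chain' R (l₁ ++ l₂) ↔ List.Chain' R l₁ ∧ List.Chain' R l₂ ∧
      ∀ x ∈ l₁.getLast?, ∀ y ∈ l₂.head?, R x y := List.isChain_append

theorem List.chain'_singleton {α : Type*} {R : α → α → Prop} (a : α) :
    List.Chain' R [a] := List.isChain_singleton a

variable {h : ℕ} (H : VertexHierarchy V h)

lemma level_spec (v : V) : 1 ≤ level H v ∧ level H v ≤ h ∧ v ∈ H.L (level H v) :=
  Nat.sInf_mem (H.cover v)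

lemma level_le (v : V) {j : ℕ} (h1 : 1 ≤ j) (h2 : j ≤ h) (hv : v ∈ H.L j) :
    level H v ≤ j :=
  Nat.sInf_le ⟨h1, h2, hv⟩

lemma mem_Vset {v : V} {k : ℕ} (hk : k ≤ h + 1) (hv : k ≤ level H v) :
    v ∈ VsetOf H.L k := by
  intro j hj1 hj2 hmem
  have := level_le H v hj1 (by omega) hmem
  omega

lemma adj_lift {j : ℕ} (hj1 : 1 ≤ j) (hj2 : j + 1 ≤ h) {u v : V}
    (hu : j + 1 ≤ level H u) (hv : j + 1 ≤ level H v) (hadj : Adj (H.w j) u v) :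
    Adj (H.w (j + 1)) u v := by
  obtain ⟨hne, hlt⟩ := hadj
  refine ⟨hne, lt_of_le_of_lt ?_ hlt⟩
  have haug := H.aug (j + 1) (by omega) hj2 u v hne
    (mem_Vset H (by omega) hu) (mem_Vset H (by omega) hv)
  simp only [Nat.add_sub_cancel] at haug
  rw [haug]
  exact min_le_left _ _

lemma adj_shortcut {j : ℕ} (hj1 : 1 ≤ j) (hj2 : j + 1 ≤ h) {u x v : V}
    (hu : j + 1 ≤ level H u) (hv : j + 1 ≤ level H v) (hx : x ∈ H.L j) (huv : u ≠ v)
    (h1 : Adj (H.w j) u x) (h2 : Adj (H.w j) x v) : Adj (H.w (j + 1)) u v := by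
  refine ⟨huv, lt_of_le_of_lt ?_ (WithTop.add_lt_top.2 ⟨h1.2, h2.2⟩)⟩
  have haug := H.aug (j + 1) (by omega) hj2 u v huv
    (mem_Vset H (by omega) hu) (mem_Vset H (by omega) hv)
  simp only [Nat.add_sub_cancel] at haug
  rw [haug]
  exact le_trans (min_le_right _ _) (iInf₂_le x hx)

/-- One contraction step: a walk in `w j` whose interior vertices have level in
`[j, i)` and whose endpoints have level `≥ j+1` yields a walk in `w (j+1)` whose
interior vertices have level in `[j+1, i)`. -/
lemma step {i j : ℕ} (hj1 : 1 ≤ j) (hji : j + 1 ≤ i) (hih : i ≤ h) :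
    ∀ N (m : List V) (a b : V), m.length ≤ N →
    j + 1 ≤ level H a → j + 1 ≤ level H b →
    (∀ x ∈ m, j ≤ level H x ∧ level H x < i) →
    List.Chain' (Adj (H.w j)) (a :: m ++ [b]) →
    ∃ m' : List V, (∀ x ∈ m', j + 1 ≤ level H x ∧ level H x < i) ∧
      ((a = b ∧ m' = []) ∨ List.Chain' (Adj (H.w (j + 1))) (a :: m' ++ [b])) := by
  have hjh : j + 1 ≤ h := le_trans hji hih
  intro N
  induction N with
  | zero =>
    intro m a b hlen ha hb hm hc
    have hm0 : m = [] := List.length_eq_zero_iff.mp (Nat.le_zero.mp hlen)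
    subst hm0
    have hadj : Adj (H.w j) a b := List.chain'_pair.mp (by simpa using hc)
    exact ⟨[], by simp, Or.inr (by simpa using List.chain'_pair.mpr (adj_lift H hj1 hjh ha hb hadj))⟩
  | succ N ih =>
    intro m a b hlen ha hb hm hc
    match m with
    | [] =>
      have hadj : Adj (H.w j) a b := List.chain'_pair.mp (by simpa using hc)
      exact ⟨[], by simp, Or.inr (by simpa using List.chain'_pair.mpr (adj_lift H hj1 hjh ha hb hadj))⟩
    | x :: m₂ =>
      have hc' : Adj (H.w j) a x ∧ List.Chain' (Adj (H.w j)) (x :: m₂ ++ [b]) := by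
        rw [show (a :: (x :: m₂) ++ [b]) = a :: x :: (m₂ ++ [b]) by simp,
          List.chain'_cons] at hc
        exact hc
      obtain ⟨hax, hc₂⟩ := hc'
      have hxlev := hm x (by simp)
      by_cases hxj : j + 1 ≤ level H x
      · -- keep x
        obtain ⟨m₂', hinv, hd⟩ := ih m₂ x b (by simpa using hlen) hxj hb
          (fun y hy => hm y (by simp [hy])) hc₂
        have haxa : Adj (H.w (j + 1)) a x := adj_lift H hj1 hjh ha hxj hax
        rcases hd with ⟨rfl, rfl⟩ | hch
        · exact ⟨[], by simp, Or.inr (by simpa using List.chain'_pair.mpr haxa)⟩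
        · refine ⟨x :: m₂', ?_, Or.inr ?_⟩
          · intro y hy
            rcases List.mem_cons.mp hy with rfl | hy
            · exact ⟨hxj, hxlev.2⟩
            · exact hinv y hy
          · rw [show (a :: (x :: m₂') ++ [b]) = a :: x :: (m₂' ++ [b]) by simp,
              List.chain'_cons]
            exact ⟨haxa, hch⟩
      · -- level x = j : x ∈ L j, shortcut over x
        have hxLj : x ∈ H.L j := by
          have : level H x = j := by omega
          exact this ▸ (level_spec H x).2.2
        match m₂ with
        | [] =>
          -- walk is a, x, b
          have hxb : Adj (H.w j) x b := List.chain'_pair.mp (by simpa using hc₂)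
          by_cases hab : a = b
          · exact ⟨[], by simp, Or.inl ⟨hab, rfl⟩⟩
          · exact ⟨[], by simp, Or.inr (by
              simpa using List.chain'_pair.mpr (adj_shortcut H hj1 hjh ha hb hxLj hab hax hxb))⟩
        | y :: m₃ =>
          have hc₃ : Adj (H.w j) x y ∧ List.Chain' (Adj (H.w j)) (y :: m₃ ++ [b]) := by
            rw [show (x :: (y :: m₃) ++ [b]) = x :: y :: (m₃ ++ [b]) by simp,
              List.chain'_cons] at hc₂
            exact hc₂
          obtain ⟨hxy, hc₄⟩ := hc₃
          have hylev := hm y (by simp)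
          have hyj : j + 1 ≤ level H y := by
            rcases Nat.lt_or_ge (level H y) (j+1) with hlt | hge
            · exfalso
              have hyLj : y ∈ H.L j := by
                have : level H y = j := by omega
                exact this ▸ (level_spec H y).2.2
              exact H.indep j hj1 (by omega) x hxLj y hyLj hxy
            · exact hge
          by_cases hay : a = y
          · -- drop x and y from the walk
            subst hay
            obtain ⟨m₃', hinv, hd⟩ := ih m₃ a b
              (by simp at hlen ⊢; omega) ha hb
              (fun z hz => hm z (by simp [hz])) hc₄
            exact ⟨m₃', hinv, hd⟩
          · have haya : Adj (H.w (j + 1)) a y := adj_shortcut H hj1 hjh ha hyj hxLj hay hax hxy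
            obtain ⟨m₃', hinv, hd⟩ := ih m₃ y b (by simp at hlen ⊢; omega) hyj hb
              (fun z hz => hm z (by simp [hz])) hc₄
            rcases hd with ⟨rfl, rfl⟩ | hch
            · exact ⟨[], by simp, Or.inr (by simpa using List.chain'_pair.mpr haya)⟩
            · refine ⟨y :: m₃', ?_, Or.inr ?_⟩
              · intro z hz
                rcases List.mem_cons.mp hz with rfl | hz
                · exact ⟨hyj, hylev.2⟩
                · exact hinv z hz
              · rw [show (a :: (y :: m₃') ++ [b]) = a :: y :: (m₃' ++ [b]) by simp,
                  List.chain'_cons]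
                exact ⟨haya, hch⟩

/-- No walk in `w 1` between two distinct vertices of level `i` has all interior
vertices of level `< i`. -/
lemma reduce {i : ℕ} (hih : i ≤ h) {a b : V} (hab : a ≠ b)
    (ha : level H a = i) (hb : level H b = i) (m : List V)
    (hm : ∀ x ∈ m, level H x < i)
    (hc : List.Chain' (Adj (H.w 1)) (a :: m ++ [b])) : False := by
  have hi1 : 1 ≤ i := le_trans (level_spec H a).1 (le_of_eq ha)
  have key : ∀ j, 1 ≤ j → j ≤ i → ∃ m' : List V,
      (∀ x ∈ m', j ≤ level H x ∧ level H x < i) ∧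
      List.Chain' (Adj (H.w j)) (a :: m' ++ [b]) := by
    intro j
    induction j with
    | zero => intro h1 _; exact absurd h1 (by omega)
    | succ j ihj =>
      intro _ hji
      rcases Nat.eq_zero_or_pos j with rfl | hj
      · exact ⟨m, fun x hx => ⟨(level_spec H x).1, hm x hx⟩, hc⟩
      · obtain ⟨m', hm', hc'⟩ := ihj hj (by omega)
        obtain ⟨m'', hm'', hd⟩ := step H hj hji hih m'.length m' a b le_rfl
          (by omega) (by omega) hm' hc'
        rcases hd with ⟨he, -⟩ | hch
        · exact absurd he hab
        · exact ⟨m'', hm'', hch⟩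
  obtain ⟨m', hm', hc'⟩ := key i hi1 le_rfl
  have hm'nil : m' = [] := by
    cases m' with
    | nil => rfl
    | cons x xs => exact absurd (hm' x (by simp)) (by omega)
  subst hm'nil
  have hadj : Adj (H.w i) a b := List.chain'_pair.mp (by simpa using hc')
  exact H.indep i hi1 hih a (ha ▸ (level_spec H a).2.2) b (hb ▸ (level_spec H b).2.2) hadj

/-- No walk in `w 1` between two distinct vertices of level `i` has all its
vertices of level `≤ i`. -/
lemma noTwo {i : ℕ} (hih : i ≤ h) :
    ∀ N (m : List V) (a b : V), m.length ≤ N → a ≠ b →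
    level H a = i → level H b = i → (∀ x ∈ m, level H x ≤ i) →
    List.Chain' (Adj (H.w 1)) (a :: m ++ [b]) → False := by
  intro N
  induction N with
  | zero =>
    intro m a b hlen hab ha hb hm hc
    have hm0 : m = [] := List.length_eq_zero_iff.mp (Nat.le_zero.mp hlen)
    subst hm0
    exact reduce H hih hab ha hb [] (by simp) hc
  | succ N ih =>
    intro m a b hlen hab ha hb hm hc
    by_cases hall : ∀ x ∈ m, level H x < i
    · exact reduce H hih hab ha hb m hall hc
    · push_neg at hall
      obtain ⟨x, hxm, hxi⟩ := hall
      have hxi' : level H x = i := le_antisymm (hm x hxm) hxi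
      obtain ⟨s, t, rfl⟩ := List.append_of_mem hxm
      rw [show (a :: (s ++ x :: t) ++ [b]) = (a :: s) ++ (x :: (t ++ [b])) by simp,
        List.chain'_append] at hc
      have hlen' : s.length ≤ N ∧ t.length ≤ N := by
        simp at hlen; omega
      by_cases hax : a = x
      · subst hax
        exact ih t a b hlen'.2 hab ha hb (fun z hz => hm z (by simp [hz]))
          (by simpa using hc.2.1)
      · have hchain : List.Chain' (Adj (H.w 1)) (a :: s ++ [x]) := by
          rw [show (a :: s ++ [x]) = (a :: s) ++ [x] by simp, List.chain'_append]
          refine ⟨hc.1, List.chain'_singleton x, ?_⟩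
          intro z hz y hy
          simp only [List.head?_cons, Option.mem_def, Option.some.injEq] at hy
          subst hy
          exact hc.2.2 z hz x (by simp)
        exact ih s a x hlen'.1 hax ha hxi' (fun z hz => hm z (by simp [hz])) hchain

lemma noTwo_in_walk (p : List V) (hc : List.Chain' (Adj (H.w 1)) p) {a b : V}
    (hap : a ∈ p) (hbp : b ∈ p) (hab : a ≠ b)
    (hmax : ∀ u ∈ p, level H u ≤ level H a) (hlev : level H b = level H a) :
    False := by
  have hih : level H a ≤ h := (level_spec H a).2.1
  obtain ⟨s₁, t₁, rfl⟩ := List.append_of_mem hap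
  have hc1 : List.Chain' (Adj (H.w 1)) (a :: t₁) :=
    (List.chain'_append.mp hc).2.1
  rcases List.mem_append.mp hbp with hbs | hbt
  · -- b before a
    obtain ⟨s₂, t₂, rfl⟩ := List.append_of_mem hbs
    have hc2 : List.Chain' (Adj (H.w 1)) (b :: (t₂ ++ a :: t₁)) := by
      have := (List.chain'_append.mp (show List.Chain' (Adj (H.w 1))
        (s₂ ++ (b :: (t₂ ++ a :: t₁))) by simpa using hc)).2.1
      exact this
    rw [show (b :: (t₂ ++ a :: t₁)) = (b :: t₂) ++ (a :: t₁) by simp,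
      List.chain'_append] at hc2
    have hchain : List.Chain' (Adj (H.w 1)) (b :: t₂ ++ [a]) := by
      rw [show (b :: t₂ ++ [a]) = (b :: t₂) ++ [a] by simp, List.chain'_append]
      refine ⟨hc2.1, List.chain'_singleton a, ?_⟩
      intro z hz y hy
      simp only [List.head?_cons, Option.mem_def, Option.some.injEq] at hy
      subst hy
      exact hc2.2.2 z hz a (by simp)
    exact noTwo H hih t₂.length t₂ b a le_rfl (Ne.symm hab) hlev rfl
      (fun x hx => hmax x (by simp [hx])) hchain
  · rcases List.mem_cons.mp hbt with rfl | hbt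
    · exact hab rfl
    · obtain ⟨s₂, t₂, rfl⟩ := List.append_of_mem hbt
      rw [show (a :: (s₂ ++ b :: t₂)) = (a :: s₂) ++ (b :: t₂) by simp,
        List.chain'_append] at hc1
      have hchain : List.Chain' (Adj (H.w 1)) (a :: s₂ ++ [b]) := by
        rw [show (a :: s₂ ++ [b]) = (a :: s₂) ++ [b] by simp, List.chain'_append]
        refine ⟨hc1.1, List.chain'_singleton b, ?_⟩
        intro z hz y hy
        simp only [List.head?_cons, Option.mem_def, Option.some.injEq] at hy
        subst hy
        exact hc1.2.2 z hz b (by simp)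
      exact noTwo H hih s₂.length s₂ a b le_rfl hab rfl hlev
        (fun x hx => hmax x (by simp [hx])) hchain

end Aux

/-- a shortest walk has a unique max-level vertex. -/
theorem maxLevel_vertex_unique [Fintype V] {h : ℕ} (H : VertexHierarchy V h)
    (s t : V) (hst : wdist (H.w 1) s t < ⊤) (p : List V)
    (hp : IsWalk (H.w 1) s t p) (hlen : pathLen (H.w 1) p = wdist (H.w 1) s t) :
    ∃! m : V, m ∈ p ∧ ∀ u ∈ p, level H u ≤ level H m := by
  obtain ⟨hne, hhead, hlast, hchain⟩ := hp
  cases hma : p.argmax (level H) with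
  | none => exact absurd (List.argmax_eq_none.mp hma) hne
  | some m =>
    have hmm : m ∈ p.argmax (level H) := by rw [hma]; rfl
    have hmem : m ∈ p := List.argmax_mem hmm
    have hmax : ∀ u ∈ p, level H u ≤ level H m :=
      fun u hu => List.le_of_mem_argmax hu hmm
    refine ⟨m, ⟨hmem, hmax⟩, ?_⟩
    rintro y ⟨hyp, hymax⟩
    by_contra hne'
    exact noTwo_in_walk H p hchain hmem hyp (fun e => hne' e.symm) hmax
      (le_antisymm (hmax y hyp) (hymax m hmem))

end ISLabel
end
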